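/- arXiv:1912.11864 — 3 statements merged into one kernel-verified Lean document; each statement's English description precedes it below -/
import Mathlib

section
/- Let k ≥ 1 and let φ be a nondegenerate monotone Boolean function on V = {0,...,k}. Then eul(φ) = μ_CNF(0̂, 1̂) = (-1)^k · μ_DNF(0̂, 1̂), where μ_CNF (resp. μ_DNF) is the Möbius function of the CNF lattice L_CNF^φ (resp. DNF lattice L_DNF^φ) of φ, 0̂ = V is the least element and 1̂ = ∅ is the greatest element of these lattices. -/
open scoped Classical

/-- Flip the membership of variable `l` in valuation `ν`. -/
def flipV {k : ℕ} (ν : Finset (Fin (k + 1))) (l : Fin (k + 1)) : Finset (Fin (k + 1)) :=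
  if l ∈ ν then ν.erase l else insert l ν

/-- The set of satisfying valuations of a Boolean function on `V = {0,...,k}`. -/
def satSet {k : ℕ} (φ : Finset (Fin (k + 1)) → Bool) : Finset (Finset (Fin (k + 1))) :=
  Finset.univ.filter (fun ν => φ ν = true)

/-- The Euler characteristic of a Boolean function: `Σ_{ν ⊨ φ} (-1)^{|ν|}`. -/
def eul {k : ℕ} (φ : Finset (Fin (k + 1)) → Bool) : ℤ :=
  ∑ ν ∈ satSet φ, (-1 : ℤ) ^ ν.card

/-- A Boolean function is monotone if enlarging a satisfying valuation keeps it satisfying. -/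
def MonotoneBF {k : ℕ} (φ : Finset (Fin (k + 1)) → Bool) : Prop :=
  ∀ ν ν' : Finset (Fin (k + 1)), ν ⊆ ν' → φ ν = true → φ ν' = true

/-- A Boolean function is nondegenerate if it depends on every variable of `V`. -/
def Nondegenerate (k : ℕ) (φ : Finset (Fin (k + 1)) → Bool) : Prop :=
  ∀ l : Fin (k + 1), ∃ ν, φ ν ≠ φ (flipV ν l)

/-- `C` is an implicate of `φ`: every satisfying valuation of `φ` intersects `C`. -/
def IsImplicate {k : ℕ} (φ : Finset (Fin (k + 1)) → Bool) (C : Finset (Fin (k + 1))) : Prop :=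
  ∀ ν, φ ν = true → (ν ∩ C).Nonempty

/-- `C` is a prime implicate of `φ`: a minimal implicate. For a nondegenerate monotone
function these are the clauses `C_0, ..., C_n` of its unique minimized CNF. -/
def IsPrimeImplicate {k : ℕ} (φ : Finset (Fin (k + 1)) → Bool)
    (C : Finset (Fin (k + 1))) : Prop :=
  IsImplicate φ C ∧ ∀ C', C' ⊂ C → ¬ IsImplicate φ C'

/-- `C` is a prime implicant of `φ`: a minimal satisfying valuation. For a nondegenerate
monotone function these are the clauses of its unique minimized DNF. -/
def IsPrimeImplicant {k : ℕ} (φ : Finset (Fin (k + 1)) → Bool)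
    (C : Finset (Fin (k + 1))) : Prop :=
  φ C = true ∧ ∀ C', C' ⊂ C → φ C' = false

/-- The elements of the CNF lattice `L_CNF^φ`: the unions `d_s = ⋃_{i ∈ s} C_i` of sets of
prime implicates of `φ`, ordered by reverse set inclusion. Its greatest element `1̂` is `∅`. -/
noncomputable def cnfLattice {k : ℕ} (φ : Finset (Fin (k + 1)) → Bool) :
    Finset (Finset (Fin (k + 1))) :=
  Finset.univ.filter (fun d => ∃ S : Finset (Finset (Fin (k + 1))),
    (∀ C ∈ S, IsPrimeImplicate φ C) ∧ d = S.sup id)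

/-- The elements of the DNF lattice `L_DNF^φ`: the unions of sets of prime implicants of `φ`,
ordered by reverse set inclusion. Its greatest element `1̂` is `∅`. -/
noncomputable def dnfLattice {k : ℕ} (φ : Finset (Fin (k + 1)) → Bool) :
    Finset (Finset (Fin (k + 1))) :=
  Finset.univ.filter (fun d => ∃ S : Finset (Finset (Fin (k + 1))),
    (∀ C ∈ S, IsPrimeImplicant φ C) ∧ d = S.sup id)

/-- The Möbius function of the poset whose elements are the members of `L`, ordered by
reverse set inclusion: `mobiusRev L v u = μ(u, v)` for `u ≤ v` (i.e. `v ⊆ u`), defined by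
`μ(u,u) = 1` and `μ(u,v) = -∑_{u < w ≤ v} μ(w,v)`, the sum ranging over the elements `w`
of `L` with `u < w ≤ v` (i.e. `v ⊆ w ⊊ u`). -/
noncomputable def mobiusRev {k : ℕ} (L : Finset (Finset (Fin (k + 1))))
    (v : Finset (Fin (k + 1))) (u : Finset (Fin (k + 1))) : ℤ :=
  if u = v then 1
  else - ∑ w ∈ (L.filter (fun w => v ⊆ w ∧ w ⊂ u)).attach, mobiusRev L v w.1
termination_by u.card
decreasing_by
  have hw := w.2
  simp only [Finset.mem_filter] at hw
  exact Finset.card_lt_card hw.2.2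

section Aux
open Finset
variable {k : ℕ} {φ : Finset (Fin (k + 1)) → Bool}

lemma exists_true_false (hnd : Nondegenerate k φ) :
    (∃ ν, φ ν = true) ∧ (∃ ν, φ ν = false) := by
  obtain ⟨ν, h⟩ := hnd 0
  cases h1 : φ ν <;> cases h2 : φ (flipV ν 0) <;> rw [h1,h2] at h <;> simp at h
  · exact ⟨⟨_, h2⟩, ⟨_, h1⟩⟩
  · exact ⟨⟨_, h1⟩, ⟨_, h2⟩⟩

lemma flip_pair (hmono : MonotoneBF φ) {l : Fin (k+1)} {ν : Finset (Fin (k+1))}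
    (h : φ ν ≠ φ (flipV ν l)) :
    φ (ν.erase l) = false ∧ φ (insert l ν) = true := by
  unfold flipV at h
  by_cases hl : l ∈ ν <;> simp [hl] at h
  · rw [Finset.insert_eq_self.2 hl]
    cases h1 : φ (ν.erase l)
    · cases h2 : φ ν
      · rw [h1, h2] at h; simp at h
      · exact ⟨rfl, rfl⟩
    · have := hmono _ _ (Finset.erase_subset l ν) h1
      rw [h1, this] at h; simp at h
  · rw [Finset.erase_eq_of_notMem hl]
    cases h1 : φ ν
    · cases h2 : φ (insert l ν)
      · rw [h1, h2] at h; simp at h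
      · exact ⟨rfl, rfl⟩
    · have := hmono _ _ (Finset.subset_insert l ν) h1
      rw [h1, this] at h; simp at h

lemma implicate_mono {C C' : Finset (Fin (k+1))} (h : IsImplicate φ C) (hs : C ⊆ C') :
    IsImplicate φ C' := fun ν hν => (h ν hν).mono (Finset.inter_subset_inter le_rfl hs)

lemma compl_implicate (hmono : MonotoneBF φ) {A : Finset (Fin (k+1))} (h : φ A = false) :
    IsImplicate φ Aᶜ := by
  intro ν hν
  rw [Finset.nonempty_iff_ne_empty]
  intro hemp
  have hsub : ν ⊆ A := by
    intro x hx
    by_contra hxA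
    exact (Finset.eq_empty_iff_forall_notMem.1 hemp x) (Finset.mem_inter.2 ⟨hx, Finset.mem_compl.2 hxA⟩)
  rw [hmono ν A hsub hν] at h; simp at h

lemma implicate_contains_prime {D : Finset (Fin (k+1))} (hD : IsImplicate φ D) :
    ∃ C, C ⊆ D ∧ IsPrimeImplicate φ C := by
  induction D using Finset.strongInduction with
  | _ D ih =>
    by_cases h : ∃ C' ⊂ D, IsImplicate φ C'
    · obtain ⟨C', hC', hI⟩ := h
      obtain ⟨C, hCs, hCp⟩ := ih C' hC' hI
      exact ⟨C, hCs.trans hC'.subset, hCp⟩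
    · push_neg at h
      exact ⟨D, le_rfl, hD, fun C' hC' => h C' hC'⟩

lemma sat_contains_prime (hD : φ D = true) :
    ∃ C, C ⊆ D ∧ IsPrimeImplicant φ C := by
  induction D using Finset.strongInduction with
  | _ D ih =>
    by_cases h : ∃ C' ⊂ D, φ C' = true
    · obtain ⟨C', hC', hI⟩ := h
      obtain ⟨C, hCs, hCp⟩ := ih C' hC' hI
      exact ⟨C, hCs.trans hC'.subset, hCp⟩
    · push_neg at h
      exact ⟨D, le_rfl, hD, fun C' hC' => by
        cases hc : φ C' with
        | false => rfl
        | true => exact absurd hc (by simp [h C' hC'])⟩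
end Aux
section Aux2
open Finset
variable {k : ℕ} {φ : Finset (Fin (k + 1)) → Bool}

lemma phi_iff_implicates (hmono : MonotoneBF φ) (ν : Finset (Fin (k+1))) :
    φ ν = true ↔ ∀ C, IsPrimeImplicate φ C → (ν ∩ C).Nonempty := by
  constructor
  · intro h C hC; exact hC.1 ν h
  · intro h
    cases hν : φ ν with
    | true => rfl
    | false =>
      exfalso
      obtain ⟨C, hCs, hCp⟩ := implicate_contains_prime (compl_implicate hmono hν)
      obtain ⟨x, hx⟩ := h C hCp
      rw [Finset.mem_inter] at hx
      exact (Finset.mem_compl.1 (hCs hx.2)) hx.1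

lemma phi_iff_implicants (hmono : MonotoneBF φ) (ν : Finset (Fin (k+1))) :
    φ ν = true ↔ ∃ C, IsPrimeImplicant φ C ∧ C ⊆ ν := by
  constructor
  · intro h
    obtain ⟨C, hCs, hCp⟩ := sat_contains_prime h
    exact ⟨C, hCp, hCs⟩
  · rintro ⟨C, hCp, hCs⟩
    exact hmono C ν hCs hCp.1

lemma empty_not_primeImplicate (hnd : Nondegenerate k φ) : ¬ IsPrimeImplicate φ ∅ := by
  intro h
  obtain ⟨⟨ν, hν⟩, _⟩ := exists_true_false hnd
  simpa using h.1 ν hν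

lemma empty_not_primeImplicant (hmono : MonotoneBF φ) (hnd : Nondegenerate k φ) :
    ¬ IsPrimeImplicant φ ∅ := by
  intro h
  obtain ⟨_, ⟨ν, hν⟩⟩ := exists_true_false hnd
  rw [hmono ∅ ν (Finset.empty_subset ν) h.1] at hν
  simp at hν

lemma exists_primeImplicate_mem (hmono : MonotoneBF φ) (hnd : Nondegenerate k φ)
    (l : Fin (k+1)) : ∃ C, IsPrimeImplicate φ C ∧ l ∈ C := by
  obtain ⟨ν, hν⟩ := hnd l
  obtain ⟨h1, h2⟩ := flip_pair hmono hν
  obtain ⟨C, hCs, hCp⟩ := implicate_contains_prime (compl_implicate hmono h1)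
  refine ⟨C, hCp, ?_⟩
  by_contra hl
  obtain ⟨x, hx⟩ := hCp.1 (insert l ν) h2
  rw [Finset.mem_inter, Finset.mem_insert] at hx
  have hxc := Finset.mem_compl.1 (hCs hx.2)
  rcases hx.1 with rfl | hxν
  · exact hl hx.2
  · exact hxc (Finset.mem_erase.2 ⟨by rintro rfl; exact hl hx.2, hxν⟩)

lemma exists_primeImplicant_mem (hmono : MonotoneBF φ) (hnd : Nondegenerate k φ)
    (l : Fin (k+1)) : ∃ C, IsPrimeImplicant φ C ∧ l ∈ C := by
  obtain ⟨ν, hν⟩ := hnd l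
  obtain ⟨h1, h2⟩ := flip_pair hmono hν
  obtain ⟨C, hCs, hCp⟩ := sat_contains_prime h2
  refine ⟨C, hCp, ?_⟩
  by_contra hl
  have : C ⊆ ν.erase l := by
    intro x hx
    rcases Finset.mem_insert.1 (hCs hx) with rfl | hxν
    · exact absurd hx hl
    · exact Finset.mem_erase.2 ⟨by rintro rfl; exact hl hx, hxν⟩
  rw [hmono C _ this hCp.1] at h1
  simp at h1
end Aux2
section Aux3
open Finset
variable {k : ℕ} {φ : Finset (Fin (k + 1)) → Bool}

lemma filter_subset_eq_powerset (A : Finset (Fin (k+1))) :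
    (Finset.univ : Finset (Finset (Fin (k+1)))).filter (fun ν => ν ⊆ A) = A.powerset := by
  ext ν; simp [Finset.mem_powerset]

lemma sum_disj (A : Finset (Fin (k+1))) :
    ∑ ν : Finset (Fin (k+1)), (if ν ∩ A = ∅ then (-1:ℤ)^ν.card else 0)
      = if A = Finset.univ then 1 else 0 := by
  rw [← Finset.sum_filter]
  have h1 : (Finset.univ : Finset (Finset (Fin (k+1)))).filter (fun ν => ν ∩ A = ∅)
      = Aᶜ.powerset := by
    ext ν
    simp only [Finset.mem_filter, Finset.mem_univ, true_and, Finset.mem_powerset]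
    constructor
    · intro h x hx
      exact Finset.mem_compl.2 (fun hxA =>
        Finset.eq_empty_iff_forall_notMem.1 h x (Finset.mem_inter.2 ⟨hx, hxA⟩))
    · intro h
      apply Finset.eq_empty_iff_forall_notMem.2
      intro x hx
      rw [Finset.mem_inter] at hx
      exact Finset.mem_compl.1 (h hx.1) hx.2
  rw [h1, Finset.sum_powerset_neg_one_pow_card]
  simp only [Finset.compl_eq_empty_iff]

lemma sum_supset (A : Finset (Fin (k+1))) :
    ∑ ν : Finset (Fin (k+1)), (if A ⊆ ν then (-1:ℤ)^ν.card else 0)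
      = if A = Finset.univ then (-1:ℤ)^A.card else 0 := by
  rw [← Finset.sum_filter]
  have h1 : ∑ ν ∈ (Finset.univ : Finset (Finset (Fin (k+1)))).filter (fun ν => A ⊆ ν),
      (-1:ℤ)^ν.card = ∑ μ ∈ Aᶜ.powerset, (-1:ℤ)^(μ ∪ A).card := by
    apply Finset.sum_nbij' (fun ν => ν \ A) (fun μ => μ ∪ A)
    · intro ν hν
      simp only [Finset.mem_filter] at hν
      simp only [Finset.mem_powerset]
      intro x hx
      rw [Finset.mem_sdiff] at hx
      exact Finset.mem_compl.2 hx.2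
    · intro μ hμ
      simp only [Finset.mem_filter, Finset.mem_univ, true_and]
      exact Finset.subset_union_right
    · intro ν hν
      simp only [Finset.mem_filter] at hν
      exact Finset.sdiff_union_of_subset hν.2
    · intro μ hμ
      rw [Finset.mem_powerset] at hμ
      rw [Finset.union_sdiff_right]
      exact Finset.sdiff_eq_self_of_disjoint (Finset.disjoint_left.2
        (fun x hx hxA => Finset.mem_compl.1 (hμ hx) hxA))
    · intro ν hν
      simp only [Finset.mem_filter] at hν
      rw [Finset.sdiff_union_of_subset hν.2]
  rw [h1]
  have h2 : ∀ μ ∈ Aᶜ.powerset, (-1:ℤ)^(μ ∪ A).card = (-1:ℤ)^A.card * (-1:ℤ)^μ.card := by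
    intro μ hμ
    rw [Finset.mem_powerset] at hμ
    rw [Finset.card_union_of_disjoint (Finset.disjoint_left.2
      (fun x hx hxA => Finset.mem_compl.1 (hμ hx) hxA)), pow_add, mul_comm]
  rw [Finset.sum_congr rfl h2, ← Finset.mul_sum, Finset.sum_powerset_neg_one_pow_card]
  simp only [Finset.compl_eq_empty_iff]
  split <;> simp
end Aux3
section Aux4
open Finset
variable {k : ℕ}

lemma mobius_eq (𝒞 : Finset (Finset (Fin (k+1)))) (h₀ : ∅ ∉ 𝒞)
    {L : Finset (Finset (Fin (k+1)))}
    (hL : ∀ d, d ∈ L ↔ ∃ S, S ⊆ 𝒞 ∧ d = S.sup id) :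
    ∀ u, u ∈ L → mobiusRev L ∅ u
      = ∑ s ∈ 𝒞.powerset.filter (fun s => s.sup id = u), (-1:ℤ)^s.card := by
  intro u
  induction u using Finset.strongInduction with
  | _ u ih =>
    intro hu
    by_cases hue : u = ∅
    · subst hue
      rw [mobiusRev, if_pos rfl]
      have hfe : 𝒞.powerset.filter (fun s => s.sup id = (∅ : Finset (Fin (k+1)))) = {∅} := by
        ext s
        simp only [Finset.mem_filter, Finset.mem_powerset, Finset.mem_singleton]
        constructor
        · rintro ⟨hs, hsup⟩
          by_contra hne
          obtain ⟨C, hC⟩ := Finset.nonempty_iff_ne_empty.2 hne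
          have h1 : C ⊆ s.sup id := Finset.le_sup (f := id) hC
          rw [hsup] at h1
          have : C = ∅ := Finset.subset_empty.1 h1
          exact h₀ (this ▸ hs hC)
        · rintro rfl; exact ⟨Finset.empty_subset _, Finset.sup_empty⟩
      rw [hfe, Finset.sum_singleton]
      simp
    · have key : ∑ w ∈ L.filter (fun w => w ⊆ u),
          (∑ s ∈ 𝒞.powerset.filter (fun s => s.sup id = w), (-1:ℤ)^s.card) = 0 := by
        have hmaps : ∀ s ∈ 𝒞.powerset.filter (fun s => s.sup id ⊆ u),
            s.sup id ∈ L.filter (fun w => w ⊆ u) := by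
          intro s hs
          rw [Finset.mem_filter, Finset.mem_powerset] at hs
          exact Finset.mem_filter.2 ⟨(hL _).2 ⟨s, hs.1, rfl⟩, hs.2⟩
        have hfib := Finset.sum_fiberwise_of_maps_to hmaps (fun s => (-1:ℤ)^s.card)
        have hinner : ∀ w ∈ L.filter (fun w => w ⊆ u),
            ∑ s ∈ (𝒞.powerset.filter (fun s => s.sup id ⊆ u)).filter
              (fun s => s.sup id = w), (-1:ℤ)^s.card
            = ∑ s ∈ 𝒞.powerset.filter (fun s => s.sup id = w), (-1:ℤ)^s.card := by
          intro w hw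
          rw [Finset.mem_filter] at hw
          congr 1
          rw [Finset.filter_filter]
          apply Finset.filter_congr
          intro s hs
          constructor
          · rintro ⟨-, h⟩; exact h
          · rintro h; exact ⟨h ▸ hw.2, h⟩
        rw [Finset.sum_congr rfl hinner] at hfib
        rw [hfib]
        have hA : 𝒞.powerset.filter (fun s => s.sup id ⊆ u)
            = (𝒞.filter (fun C => C ⊆ u)).powerset := by
          ext s
          simp only [Finset.mem_filter, Finset.mem_powerset]
          constructor
          · rintro ⟨hs, hsup⟩
            intro C hC
            exact Finset.mem_filter.2 ⟨hs hC, (Finset.le_sup (f := id) hC).trans hsup⟩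
          · intro h
            refine ⟨fun C hC => (Finset.mem_filter.1 (h hC)).1, ?_⟩
            exact Finset.sup_le fun C hC => (Finset.mem_filter.1 (h hC)).2
        rw [hA, Finset.sum_powerset_neg_one_pow_card, if_neg]
        intro hemp
        obtain ⟨S, hS, rfl⟩ := (hL u).1 hu
        have hSne : S.Nonempty := by
          rw [Finset.nonempty_iff_ne_empty]
          rintro rfl
          exact hue Finset.sup_empty
        obtain ⟨C, hC⟩ := hSne
        have : C ∈ 𝒞.filter (fun C => C ⊆ S.sup id) :=
          Finset.mem_filter.2 ⟨hS hC, Finset.le_sup (f := id) hC⟩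
        rw [hemp] at this
        exact Finset.notMem_empty _ this
      have hsplit : L.filter (fun w => w ⊆ u)
          = insert u (L.filter (fun w => w ⊂ u)) := by
        ext w
        simp only [Finset.mem_filter, Finset.mem_insert]
        constructor
        · rintro ⟨hwL, hwu⟩
          rcases eq_or_lt_of_le hwu with h | h
          · exact Or.inl h
          · exact Or.inr ⟨hwL, h⟩
        · rintro (rfl | ⟨hwL, hwu⟩)
          · exact ⟨hu, le_rfl⟩
          · exact ⟨hwL, hwu.subset⟩
      rw [hsplit, Finset.sum_insert (by intro h; exact absurd (Finset.mem_filter.1 h).2 (lt_irrefl u))] at key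
      rw [mobiusRev, if_neg hue, Finset.sum_attach _ (fun w => mobiusRev L ∅ w)]
      have hfeq : L.filter (fun w => (∅:Finset (Fin (k+1))) ⊆ w ∧ w ⊂ u)
          = L.filter (fun w => w ⊂ u) := by
        apply Finset.filter_congr; intro w _; simp
      rw [hfeq]
      have hsum : ∑ w ∈ L.filter (fun w => w ⊂ u), mobiusRev L ∅ w
          = ∑ w ∈ L.filter (fun w => w ⊂ u),
              ∑ s ∈ 𝒞.powerset.filter (fun s => s.sup id = w), (-1:ℤ)^s.card := by
        apply Finset.sum_congr rfl
        intro w hw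
        rw [Finset.mem_filter] at hw
        exact ih w hw.2 hw.1
      rw [hsum]
      linarith [key]
end Aux4
section Aux5
open Finset
variable {k : ℕ} {φ : Finset (Fin (k + 1)) → Bool}

lemma inter_empty_iff (ν d : Finset (Fin (k+1))) : ν ∩ d = ∅ ↔ d ⊆ νᶜ := by
  constructor
  · intro h x hx
    rw [Finset.mem_compl]
    intro hxν
    exact Finset.notMem_empty x (h ▸ Finset.mem_inter.2 ⟨hxν, hx⟩)
  · intro h
    apply Finset.eq_empty_iff_forall_notMem.2
    intro x hx
    rw [Finset.mem_inter] at hx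
    exact Finset.mem_compl.1 (h hx.2) hx.1

lemma powerset_filter_inter (PI : Finset (Finset (Fin (k+1)))) (ν : Finset (Fin (k+1))) :
    PI.powerset.filter (fun s => ν ∩ s.sup id = ∅)
      = (PI.filter (fun C => ν ∩ C = ∅)).powerset := by
  ext s
  simp only [Finset.mem_filter, Finset.mem_powerset]
  rw [inter_empty_iff]
  constructor
  · rintro ⟨hs, hsup⟩ C hC
    exact Finset.mem_filter.2 ⟨hs hC, (inter_empty_iff ν C).2
      ((Finset.le_sup (f := id) hC).trans hsup)⟩
  · intro h
    refine ⟨fun C hC => (Finset.mem_filter.1 (h hC)).1, ?_⟩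
    exact Finset.sup_le fun C hC =>
      (inter_empty_iff ν C).1 (Finset.mem_filter.1 (h hC)).2

lemma powerset_filter_subset (PD : Finset (Finset (Fin (k+1)))) (ν : Finset (Fin (k+1))) :
    PD.powerset.filter (fun s => s.sup id ⊆ ν)
      = (PD.filter (fun C => C ⊆ ν)).powerset := by
  ext s
  simp only [Finset.mem_filter, Finset.mem_powerset]
  constructor
  · rintro ⟨hs, hsup⟩ C hC
    exact Finset.mem_filter.2 ⟨hs hC, (Finset.le_sup (f := id) hC).trans hsup⟩
  · intro h
    refine ⟨fun C hC => (Finset.mem_filter.1 (h hC)).1, ?_⟩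
    exact Finset.sup_le fun C hC => (Finset.mem_filter.1 (h hC)).2

lemma eul_eq_sum_ite : eul φ = ∑ ν : Finset (Fin (k+1)),
    (if φ ν = true then (-1:ℤ)^ν.card else 0) := by
  rw [eul, satSet, Finset.sum_filter]

lemma eul_cnf (hmono : MonotoneBF φ) (hnd : Nondegenerate k φ) :
    eul φ = ∑ s ∈ ((Finset.univ.filter (fun C => IsPrimeImplicate φ C)).powerset.filter
      (fun s => s.sup id = Finset.univ)), (-1:ℤ)^s.card := by
  set PI := Finset.univ.filter (fun C => IsPrimeImplicate φ C) with hPI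
  have hpt : ∀ (ν : Finset (Fin (k+1))) (X : ℤ),
      ∑ s ∈ PI.powerset, (-1:ℤ)^s.card * (if ν ∩ s.sup id = ∅ then X else 0)
        = if φ ν = true then X else 0 := by
    intro ν X
    have h1 : ∀ s ∈ PI.powerset, (-1:ℤ)^s.card * (if ν ∩ s.sup id = ∅ then X else 0)
        = if ν ∩ s.sup id = ∅ then (-1:ℤ)^s.card * X else 0 := by
      intro s _; rw [mul_ite, mul_zero]
    rw [Finset.sum_congr rfl h1, ← Finset.sum_filter, powerset_filter_inter,
      ← Finset.sum_mul, Finset.sum_powerset_neg_one_pow_card]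
    have hcond : (PI.filter (fun C => ν ∩ C = ∅) = ∅) ↔ (φ ν = true) := by
      rw [Finset.filter_eq_empty_iff, phi_iff_implicates hmono]
      constructor
      · intro h C hC
        rw [Finset.nonempty_iff_ne_empty]
        exact h (Finset.mem_filter.2 ⟨Finset.mem_univ C, hC⟩)
      · intro h C hC he
        have := h C (Finset.mem_filter.1 hC).2
        rw [he] at this
        simp at this
    rw [if_congr hcond rfl rfl, ite_mul, one_mul, zero_mul]
  rw [eul_eq_sum_ite]
  have h2 : ∀ ν : Finset (Fin (k+1)), (if φ ν = true then (-1:ℤ)^ν.card else 0)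
      = ∑ s ∈ PI.powerset, (-1:ℤ)^s.card
          * (if ν ∩ s.sup id = ∅ then (-1:ℤ)^ν.card else 0) :=
    fun ν => (hpt ν _).symm
  rw [Finset.sum_congr rfl (fun ν _ => h2 ν), Finset.sum_comm]
  have h3 : ∀ s ∈ PI.powerset,
      ∑ ν : Finset (Fin (k+1)), (-1:ℤ)^s.card
          * (if ν ∩ s.sup id = ∅ then (-1:ℤ)^ν.card else 0)
      = if s.sup id = Finset.univ then (-1:ℤ)^s.card else 0 := by
    intro s _
    rw [← Finset.mul_sum, sum_disj, mul_ite, mul_one, mul_zero]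
  rw [Finset.sum_congr rfl h3, ← Finset.sum_filter]

lemma eul_dnf (hmono : MonotoneBF φ) (hnd : Nondegenerate k φ) :
    eul φ = (-1:ℤ)^k * ∑ s ∈ ((Finset.univ.filter (fun C => IsPrimeImplicant φ C)).powerset.filter
      (fun s => s.sup id = Finset.univ)), (-1:ℤ)^s.card := by
  set PD := Finset.univ.filter (fun C => IsPrimeImplicant φ C) with hPD
  have hpt : ∀ (ν : Finset (Fin (k+1))) (X : ℤ),
      ∑ s ∈ PD.powerset, (-1:ℤ)^s.card * (if s.sup id ⊆ ν then X else 0)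
        = if φ ν = true then 0 else X := by
    intro ν X
    have h1 : ∀ s ∈ PD.powerset, (-1:ℤ)^s.card * (if s.sup id ⊆ ν then X else 0)
        = if s.sup id ⊆ ν then (-1:ℤ)^s.card * X else 0 := by
      intro s _; rw [mul_ite, mul_zero]
    rw [Finset.sum_congr rfl h1, ← Finset.sum_filter, powerset_filter_subset,
      ← Finset.sum_mul, Finset.sum_powerset_neg_one_pow_card]
    have hcond : (PD.filter (fun C => C ⊆ ν) = ∅) ↔ ¬ (φ ν = true) := by
      rw [Finset.filter_eq_empty_iff, phi_iff_implicants hmono]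
      constructor
      · rintro h ⟨C, hC, hCν⟩
        exact h (Finset.mem_filter.2 ⟨Finset.mem_univ C, hC⟩) hCν
      · intro h C hC hCν
        exact h ⟨C, (Finset.mem_filter.1 hC).2, hCν⟩
    rw [if_congr hcond rfl rfl, ite_mul, one_mul, zero_mul]
    by_cases hφ : φ ν = true <;> simp [hφ]
  rw [eul_eq_sum_ite]
  have h2 : ∀ ν : Finset (Fin (k+1)), (if φ ν = true then (-1:ℤ)^ν.card else 0)
      = (-1:ℤ)^ν.card - ∑ s ∈ PD.powerset, (-1:ℤ)^s.card
          * (if s.sup id ⊆ ν then (-1:ℤ)^ν.card else 0) := by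
    intro ν
    rw [hpt ν _]
    by_cases hφ : φ ν = true <;> simp [hφ]
  rw [Finset.sum_congr rfl (fun ν _ => h2 ν), Finset.sum_sub_distrib]
  have hz : ∑ ν : Finset (Fin (k+1)), (-1:ℤ)^ν.card = 0 := by
    rw [← Finset.powerset_univ, Finset.sum_powerset_neg_one_pow_card, if_neg]
    exact Finset.nonempty_iff_ne_empty.1 ⟨0, Finset.mem_univ 0⟩
  rw [hz, Finset.sum_comm]
  have h3 : ∀ s ∈ PD.powerset,
      ∑ ν : Finset (Fin (k+1)), (-1:ℤ)^s.card
          * (if s.sup id ⊆ ν then (-1:ℤ)^ν.card else 0)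
      = if s.sup id = Finset.univ then (-1:ℤ)^s.card * (-1:ℤ)^(k+1) else 0 := by
    intro s _
    rw [← Finset.mul_sum, sum_supset, mul_ite, mul_zero]
    split
    · next h => rw [h, Finset.card_univ, Fintype.card_fin]
    · rfl
  rw [Finset.sum_congr rfl h3, ← Finset.sum_filter, zero_sub,
    ← Finset.sum_neg_distrib, Finset.mul_sum]
  apply Finset.sum_congr rfl
  intro s _
  rw [pow_succ]
  ring
end Aux5
section Aux6
open Finset
variable {k : ℕ} {φ : Finset (Fin (k + 1)) → Bool}

lemma cnf_mem_iff (d : Finset (Fin (k+1))) : d ∈ cnfLattice φ ↔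
    ∃ S, S ⊆ Finset.univ.filter (fun C => IsPrimeImplicate φ C) ∧ d = S.sup id := by
  rw [cnfLattice, Finset.mem_filter]
  constructor
  · rintro ⟨-, S, hS, rfl⟩
    exact ⟨S, fun C hC => Finset.mem_filter.2 ⟨Finset.mem_univ C, hS C hC⟩, rfl⟩
  · rintro ⟨S, hS, rfl⟩
    exact ⟨Finset.mem_univ _, S, fun C hC => (Finset.mem_filter.1 (hS hC)).2, rfl⟩

lemma dnf_mem_iff (d : Finset (Fin (k+1))) : d ∈ dnfLattice φ ↔
    ∃ S, S ⊆ Finset.univ.filter (fun C => IsPrimeImplicant φ C) ∧ d = S.sup id := by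
  rw [dnfLattice, Finset.mem_filter]
  constructor
  · rintro ⟨-, S, hS, rfl⟩
    exact ⟨S, fun C hC => Finset.mem_filter.2 ⟨Finset.mem_univ C, hS C hC⟩, rfl⟩
  · rintro ⟨S, hS, rfl⟩
    exact ⟨Finset.mem_univ _, S, fun C hC => (Finset.mem_filter.1 (hS hC)).2, rfl⟩

lemma univ_mem_cnf (hmono : MonotoneBF φ) (hnd : Nondegenerate k φ) :
    (Finset.univ : Finset (Fin (k+1))) ∈ cnfLattice φ := by
  rw [cnf_mem_iff]
  refine ⟨Finset.univ.filter (fun C => IsPrimeImplicate φ C), le_rfl, ?_⟩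
  apply Finset.Subset.antisymm
  · intro l _
    obtain ⟨C, hCp, hl⟩ := exists_primeImplicate_mem hmono hnd l
    exact (Finset.le_sup (f := id) (Finset.mem_filter.2 ⟨Finset.mem_univ C, hCp⟩)) hl
  · exact Finset.subset_univ _

lemma univ_mem_dnf (hmono : MonotoneBF φ) (hnd : Nondegenerate k φ) :
    (Finset.univ : Finset (Fin (k+1))) ∈ dnfLattice φ := by
  rw [dnf_mem_iff]
  refine ⟨Finset.univ.filter (fun C => IsPrimeImplicant φ C), le_rfl, ?_⟩
  apply Finset.Subset.antisymm
  · intro l _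
    obtain ⟨C, hCp, hl⟩ := exists_primeImplicant_mem hmono hnd l
    exact (Finset.le_sup (f := id) (Finset.mem_filter.2 ⟨Finset.mem_univ C, hCp⟩)) hl
  · exact Finset.subset_univ _
end Aux6



/-- for a nondegenerate monotone Boolean function `φ` on `V = {0,...,k}`,
`eul(φ) = μ_CNF(0̂, 1̂) = (-1)^k · μ_DNF(0̂, 1̂)`, where `0̂ = V` and `1̂ = ∅`. -/
theorem stmt0 (k : ℕ) (hk : 1 ≤ k) (φ : Finset (Fin (k + 1)) → Bool)
    (hmono : MonotoneBF φ) (hnd : Nondegenerate k φ) :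
    eul φ = mobiusRev (cnfLattice φ) ∅ (Finset.univ : Finset (Fin (k + 1))) ∧
    mobiusRev (cnfLattice φ) ∅ (Finset.univ : Finset (Fin (k + 1)))
      = (-1 : ℤ) ^ k * mobiusRev (dnfLattice φ) ∅ (Finset.univ : Finset (Fin (k + 1))) := by
  have hPIe : ∅ ∉ Finset.univ.filter (fun C => IsPrimeImplicate φ C) := by
    intro h; exact empty_not_primeImplicate hnd (Finset.mem_filter.1 h).2
  have hPDe : ∅ ∉ Finset.univ.filter (fun C => IsPrimeImplicant φ C) := by
    intro h; exact empty_not_primeImplicant hmono hnd (Finset.mem_filter.1 h).2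
  have h1 := mobius_eq _ hPIe cnf_mem_iff Finset.univ (univ_mem_cnf hmono hnd)
  have h2 := mobius_eq _ hPDe dnf_mem_iff Finset.univ (univ_mem_dnf hmono hnd)
  constructor
  · rw [h1]; exact eul_cnf hmono hnd
  · rw [h1, h2, ← eul_cnf hmono hnd]; exact eul_dnf hmono hnd
end

section
/- Let k ≥ 1 and let φ be a Boolean function on V = {0,...,k}. If φ is fragmentable, then eul(φ) = 0. -/
open scoped Classical

/-- A Boolean function is degenerate if there is a variable on which it does not depend. -/
def Degenerate (k : ℕ) (φ : Finset (Fin (k + 1)) → Bool) : Prop :=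
  ∃ l : Fin (k + 1), ∀ ν, φ ν = φ (flipV ν l)

/-- Fragmentable Boolean functions: the smallest class of Boolean functions on `V` containing
all degenerate functions and closed under negation and under disjunction of two disjoint
members of the class. -/
inductive Fragmentable (k : ℕ) : (Finset (Fin (k + 1)) → Bool) → Prop
  | degen (φ) (h : Degenerate k φ) : Fragmentable k φ
  | neg (φ) (h : Fragmentable k φ) : Fragmentable k (fun ν => !(φ ν))
  | disj (φ ψ) (hφ : Fragmentable k φ) (hψ : Fragmentable k ψ)
      (hdisj : ∀ ν, ¬(φ ν = true ∧ ψ ν = true)) :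
      Fragmentable k (fun ν => φ ν || ψ ν)

lemma flipV_flipV {k : ℕ} (ν : Finset (Fin (k + 1))) (l : Fin (k + 1)) :
    flipV (flipV ν l) l = ν := by
  unfold flipV
  by_cases h : l ∈ ν
  · simp [h, Finset.insert_erase h]
  · simp [h, Finset.erase_insert h]

lemma flipV_card {k : ℕ} (ν : Finset (Fin (k + 1))) (l : Fin (k + 1)) :
    (-1 : ℤ) ^ (flipV ν l).card = -(-1 : ℤ) ^ ν.card := by
  unfold flipV
  by_cases h : l ∈ ν
  · obtain ⟨n, hn⟩ : ∃ n, ν.card = n + 1 :=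
      ⟨ν.card - 1, (Nat.succ_pred_eq_of_pos (Finset.card_pos.2 ⟨l, h⟩)).symm⟩
    simp [h, Finset.card_erase_of_mem h, hn, pow_succ]
  · simp [h, Finset.card_insert_of_notMem h, pow_succ]

lemma flipV_ne {k : ℕ} (ν : Finset (Fin (k + 1))) (l : Fin (k + 1)) :
    flipV ν l ≠ ν := by
  unfold flipV
  by_cases h : l ∈ ν
  · simp only [h, if_true]
    intro he
    exact (he ▸ Finset.notMem_erase l ν) h
  · simp only [h, if_false]
    intro he
    exact h (he ▸ Finset.mem_insert_self l ν)

lemma eul_degen {k : ℕ} (φ : Finset (Fin (k + 1)) → Bool) (h : Degenerate k φ) :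
    eul φ = 0 := by
  obtain ⟨l, hl⟩ := h
  unfold eul
  apply Finset.sum_involution (fun ν _ => flipV ν l)
  · intro ν _
    rw [flipV_card]; ring
  · intro ν _ _
    exact flipV_ne ν l
  · intro ν hν
    simp only [satSet, Finset.mem_filter, Finset.mem_univ, true_and] at hν ⊢
    rw [← hl]; exact hν
  · intro ν _
    exact flipV_flipV ν l

lemma eul_total {k : ℕ} :
    ∑ ν : Finset (Fin (k + 1)), (-1 : ℤ) ^ ν.card = 0 := by
  rw [← Finset.sum_powerset_neg_one_pow_card_of_nonempty
    (Finset.univ_nonempty (α := Fin (k + 1)))]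
  apply Finset.sum_congr _ (fun _ _ => rfl)
  ext ν
  simp [Finset.mem_powerset]

lemma eul_neg {k : ℕ} (φ : Finset (Fin (k + 1)) → Bool) :
    eul (fun ν => !(φ ν)) = - eul φ := by
  have h : eul (fun ν => !(φ ν)) + eul φ
      = ∑ ν : Finset (Fin (k + 1)), (-1 : ℤ) ^ ν.card := by
    unfold eul satSet
    rw [← Finset.sum_filter_add_sum_filter_not Finset.univ (fun ν => φ ν = false)]
    congr 1
    · apply Finset.sum_congr _ (fun _ _ => rfl)
      ext ν; simp
    · apply Finset.sum_congr _ (fun _ _ => rfl)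
      ext ν; simp
  rw [eul_total] at h
  linarith

lemma eul_disj {k : ℕ} (φ ψ : Finset (Fin (k + 1)) → Bool)
    (hdisj : ∀ ν, ¬(φ ν = true ∧ ψ ν = true)) :
    eul (fun ν => φ ν || ψ ν) = eul φ + eul ψ := by
  unfold eul satSet
  rw [← Finset.sum_union]
  · apply Finset.sum_congr _ (fun _ _ => rfl)
    ext ν
    simp [Finset.mem_union]
  · rw [Finset.disjoint_filter]
    intro ν _ h1 h2
    exact hdisj ν ⟨h1, h2⟩

/-- if `φ` is fragmentable then `eul(φ) = 0`. -/
theorem stmt2 (k : ℕ) (hk : 1 ≤ k) (φ : Finset (Fin (k + 1)) → Bool)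
    (h : Fragmentable k φ) : eul φ = 0 := by
  induction h with
  | degen φ h => exact eul_degen φ h
  | neg φ _ ih => rw [eul_neg, ih]; ring
  | disj φ ψ _ _ hdisj ihφ ihψ => rw [eul_disj φ ψ hdisj, ihφ, ihψ]; ring
end

section
/- Let k ≥ 1 and let φ be a Boolean function on V = {0,...,k}. If eul(φ) = 0, then φ is fragmentable. -/
open scoped Classical

open scoped symmDiff

namespace StmtAux

variable {k : ℕ}

lemma flipV_eq (ν : Finset (Fin (k+1))) (l : Fin (k+1)) : flipV ν l = ν ∆ {l} := by
  unfold flipV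
  by_cases h : l ∈ ν <;> ext x <;> by_cases hx : x = l <;>
    simp [Finset.mem_symmDiff, h, hx]

lemma frag_ext (φ ψ : Finset (Fin (k+1)) → Bool) (h : ∀ ν, φ ν = ψ ν)
    (hf : Fragmentable k φ) : Fragmentable k ψ := by
  have : φ = ψ := funext h
  exact this ▸ hf

/-- Fragmentability of an indicator of a set of valuations. -/
def Frag (S : Finset (Finset (Fin (k+1)))) : Prop :=
  Fragmentable k (fun ν => decide (ν ∈ S))

lemma frag_empty : Frag (k := k) ∅ := by
  apply Fragmentable.degen
  exact ⟨0, fun ν => by simp⟩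

lemma frag_pair_adj (a : Finset (Fin (k+1))) (l : Fin (k+1)) :
    Frag (k := k) {a, a ∆ {l}} := by
  apply Fragmentable.degen
  refine ⟨l, fun ν => ?_⟩
  have key : ν ∈ ({a, a ∆ {l}} : Finset _) ↔ flipV ν l ∈ ({a, a ∆ {l}} : Finset _) := by
    rw [flipV_eq]
    simp only [Finset.mem_insert, Finset.mem_singleton]
    constructor
    · rintro (rfl | rfl)
      · right; rfl
      · left; exact symmDiff_symmDiff_cancel_right {l} a
    · rintro (h | h)
      · right
        rw [← h, symmDiff_symmDiff_cancel_right]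
      · left
        have h2 := congrArg (fun s => s ∆ ({l} : Finset (Fin (k+1)))) h
        simpa [symmDiff_symmDiff_cancel_right] using h2
  simp [key]

lemma frag_union (S T : Finset (Finset (Fin (k+1)))) (hd : Disjoint S T)
    (hS : Frag S) (hT : Frag T) : Frag (S ∪ T) := by
  have h := Fragmentable.disj _ _ hS hT (by
    intro ν ⟨h1, h2⟩
    exact Finset.disjoint_left.mp hd (by simpa using h1) (by simpa using h2))
  exact frag_ext _ _ (fun ν => by by_cases h1 : ν ∈ S <;> by_cases h2 : ν ∈ T <;>
    simp [Finset.mem_union, h1, h2]) h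

lemma frag_sdiff (S T : Finset (Finset (Fin (k+1)))) (hsub : T ⊆ S)
    (hS : Frag S) (hT : Frag T) : Frag (S \ T) := by
  have h1 := Fragmentable.neg _ hS
  have h2 := Fragmentable.disj _ _ h1 hT (by
    intro ν ⟨ha, hb⟩
    simp only [Bool.not_eq_true', decide_eq_false_iff_not, decide_eq_true_eq] at ha hb
    exact ha (hsub hb))
  have h3 := Fragmentable.neg _ h2
  refine frag_ext _ _ (fun ν => ?_) h3
  by_cases hy : ν ∈ T
  · simp [Finset.mem_sdiff, hy, hsub hy]
  · by_cases hx : ν ∈ S <;> simp [Finset.mem_sdiff, hx, hy]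

lemma frag_pair (d : ℕ) (hd : Odd d) : ∀ a b : Finset (Fin (k+1)),
    (a ∆ b).card = d → Frag (k := k) {a, b} := by
  induction d using Nat.strong_induction_on with
  | _ d ih =>
    intro a b hcard
    have hpos : 0 < d := hd.pos
    rcases eq_or_ne d 1 with h1 | h1
    · -- adjacent
      subst h1
      obtain ⟨l, hl⟩ := Finset.card_eq_one.mp hcard
      have hb : b = a ∆ {l} := by
        have := symmDiff_symmDiff_cancel_left a b
        rw [hl] at this; exact this.symm
      rw [hb]; exact frag_pair_adj a l
    · -- d ≥ 3
      have hd3 : 3 ≤ d := by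
        rcases hd with ⟨m, rfl⟩; omega
      obtain ⟨l, hl⟩ : (a ∆ b).Nonempty := Finset.card_pos.mp (by omega)
      set c := b ∆ {l} with hc
      have hac : a ∆ c = (a ∆ b).erase l := by
        rw [hc, ← symmDiff_assoc]
        ext x; by_cases hx : x = l <;> simp [Finset.mem_symmDiff, hx, hl]
      have hacc : (a ∆ c).card = d - 1 := by
        rw [hac, Finset.card_erase_of_mem hl, hcard]
      obtain ⟨l', hl'⟩ : (a ∆ c).Nonempty := Finset.card_pos.mp (by omega)
      have hll' : l' ≠ l := by
        rw [hac] at hl'; exact Finset.ne_of_mem_erase hl'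
      set e := c ∆ {l'} with he
      have hae : a ∆ e = (a ∆ c).erase l' := by
        rw [he, ← symmDiff_assoc]
        ext x; by_cases hx : x = l' <;> simp [Finset.mem_symmDiff, hx, hl']
      have haec : (a ∆ e).card = d - 2 := by
        rw [hae, Finset.card_erase_of_mem hl', hacc]; omega
      -- distinctness
      have hne : ∀ x y : Finset (Fin (k+1)), x ∆ y ≠ ∅ → x ≠ y := by
        intro x y h hxy; exact h (by simp [hxy, symmDiff_eq_bot])
      have hbc : b ∆ c = {l} := by rw [hc, ← symmDiff_assoc]; simp
      have hce : c ∆ e = {l'} := by rw [he, ← symmDiff_assoc]; simp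
      have hbe : b ∆ e = {l, l'} := by
        rw [he, hc, symmDiff_assoc, symmDiff_symmDiff_cancel_left]
        ext x
        simp only [Finset.mem_symmDiff, Finset.mem_singleton, Finset.mem_insert]
        constructor
        · rintro (⟨rfl, _⟩ | ⟨rfl, _⟩) <;> tauto
        · rintro (rfl | rfl)
          · exact Or.inl ⟨rfl, fun h => hll' h.symm⟩
          · exact Or.inr ⟨rfl, hll'⟩
      have nab : a ≠ b := hne _ _ (by intro h; rw [h] at hcard; simp at hcard; omega)
      have nac : a ≠ c := hne _ _ (by intro h; rw [h] at hacc; simp at hacc; omega)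
      have nae : a ≠ e := hne _ _ (by intro h; rw [h] at haec; simp at haec; omega)
      have nbc : b ≠ c := hne _ _ (by rw [hbc]; simp)
      have nbe : b ≠ e := hne _ _ (by rw [hbe]; simp)
      have nce : c ≠ e := hne _ _ (by rw [hce]; simp)
      -- Frag {a, e} by IH
      have hfae : Frag (k := k) {a, e} := by
        refine ih (d - 2) (by omega) ?_ a e haec
        rcases hd with ⟨m, rfl⟩; exact ⟨m - 1, by omega⟩
      -- Frag {b, c} and {c, e} adjacent
      have hfbc : Frag (k := k) {b, c} := frag_pair_adj b l
      have hfce : Frag (k := k) {c, e} := by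
        have := frag_pair_adj c l'
        rwa [← he] at this
      -- union
      have hdisj : Disjoint ({a, e} : Finset _) ({b, c} : Finset _) := by
        simp [Finset.disjoint_left, nab, nac, nae, nbc, nbe, nce, nab.symm, nac.symm,
          nae.symm, nbc.symm, nbe.symm, nce.symm]
      have hU : Frag (k := k) ({a, e} ∪ {b, c}) := frag_union _ _ hdisj hfae hfbc
      have hsub : ({c, e} : Finset _) ⊆ ({a, e} ∪ {b, c}) := by
        intro x hx; simp at hx ⊢; tauto
      have := frag_sdiff _ _ hsub hU hfce
      have heq : ({a, e} ∪ {b, c}) \ ({c, e} : Finset _) = {a, b} := by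
        ext x
        simp only [Finset.mem_sdiff, Finset.mem_union, Finset.mem_insert,
          Finset.mem_singleton]
        constructor
        · rintro ⟨h1, h2⟩
          push_neg at h2
          rcases h1 with (rfl | rfl) | (rfl | rfl)
          · exact Or.inl rfl
          · exact absurd rfl h2.2
          · exact Or.inr rfl
          · exact absurd rfl h2.1
        · rintro (rfl | rfl)
          · exact ⟨Or.inl (Or.inl rfl), by push_neg; exact ⟨nac, nae⟩⟩
          · exact ⟨Or.inr (Or.inl rfl), by push_neg; exact ⟨nbc, nbe⟩⟩
      rwa [heq] at this

lemma parity_symmDiff (a b : Finset (Fin (k+1))) (ha : Even a.card) (hb : ¬ Even b.card) :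
    Odd ((a ∆ b).card) := by
  have h1 : (a ∆ b).card = (a \ b).card + (b \ a).card := by
    rw [show a ∆ b = (a \ b) ∪ (b \ a) by
      ext x; simp [Finset.mem_symmDiff]]
    exact Finset.card_union_of_disjoint disjoint_sdiff_sdiff
  have h2 : (a \ b).card + (a ∩ b).card = a.card := Finset.card_sdiff_add_card_inter a b
  have h3 : (b \ a).card + (b ∩ a).card = b.card := Finset.card_sdiff_add_card_inter b a
  have h4 : (a ∩ b).card = (b ∩ a).card := by rw [Finset.inter_comm]
  rw [Nat.even_iff] at ha
  rw [Nat.even_iff] at hb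
  rw [Nat.odd_iff]
  omega

lemma frag_of_sum (n : ℕ) : ∀ S : Finset (Finset (Fin (k+1))), S.card = n →
    (∑ ν ∈ S, (-1 : ℤ) ^ ν.card) = 0 → Frag (k := k) S := by
  induction n using Nat.strong_induction_on with
  | _ n ih =>
    intro S hcard hsum
    rcases Finset.eq_empty_or_nonempty S with rfl | hne
    · exact frag_empty
    · -- find a with even card and b with odd card
      have sign : ∀ ν : Finset (Fin (k+1)), (-1:ℤ)^ν.card = 1 ∨ (-1:ℤ)^ν.card = -1 := by
        intro ν; rcases Nat.even_or_odd ν.card with h | h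
        · left; exact h.neg_one_pow
        · right; exact h.neg_one_pow
      have ha : ∃ a ∈ S, (-1:ℤ)^a.card = 1 := by
        by_contra hcon
        push_neg at hcon
        have : ∑ ν ∈ S, (-1:ℤ)^ν.card = ∑ ν ∈ S, (-1 : ℤ) :=
          Finset.sum_congr rfl (fun ν hν => (sign ν).resolve_left (hcon ν hν))
        rw [this, Finset.sum_const, nsmul_eq_mul, mul_neg_one, neg_eq_zero] at hsum
        have := hne.card_pos
        omega
      have hb : ∃ b ∈ S, (-1:ℤ)^b.card = -1 := by
        by_contra hcon
        push_neg at hcon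
        have : ∑ ν ∈ S, (-1:ℤ)^ν.card = ∑ ν ∈ S, (1 : ℤ) :=
          Finset.sum_congr rfl (fun ν hν => (sign ν).resolve_right (hcon ν hν))
        rw [this, Finset.sum_const, nsmul_eq_mul, mul_one] at hsum
        have := hne.card_pos
        omega
      obtain ⟨a, haS, ha1⟩ := ha
      obtain ⟨b, hbS, hb1⟩ := hb
      have hab : a ≠ b := by rintro rfl; rw [ha1] at hb1; norm_num at hb1
      have haeven : Even a.card := by
        by_contra h
        rw [(Nat.not_even_iff_odd.mp h).neg_one_pow] at ha1; norm_num at ha1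
      have hbodd : ¬ Even b.card := by
        intro h
        rw [h.neg_one_pow] at hb1; norm_num at hb1
      have hpairsub : ({a, b} : Finset _) ⊆ S := by
        intro x hx; simp at hx; rcases hx with rfl | rfl <;> assumption
      have hfp : Frag (k := k) {a, b} :=
        frag_pair _ (parity_symmDiff a b haeven hbodd) a b rfl
      have hsum' : (∑ ν ∈ S \ {a, b}, (-1 : ℤ) ^ ν.card) = 0 := by
        have h5 := Finset.sum_sdiff (f := fun ν : Finset (Fin (k+1)) => (-1:ℤ)^ν.card) hpairsub
        rw [Finset.sum_pair hab, ha1, hb1, hsum] at h5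
        simpa using h5
      have hcard' : (S \ {a, b}).card = n - 2 := by
        rw [Finset.card_sdiff_of_subset hpairsub, Finset.card_pair hab, hcard]
      have hn2 : 2 ≤ n := by
        have h2 := Finset.card_le_card hpairsub
        rw [Finset.card_pair hab, hcard] at h2
        exact h2
      have hrest : Frag (k := k) (S \ {a, b}) :=
        ih (n - 2) (by omega) _ hcard' hsum'
      have : Frag (k := k) ((S \ {a, b}) ∪ {a, b}) :=
        frag_union _ _ (by simp [Finset.disjoint_left]) hrest hfp
      rwa [Finset.sdiff_union_of_subset hpairsub] at this

end StmtAux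

/-- if `eul(φ) = 0` then `φ` is fragmentable. -/
theorem stmt3 (k : ℕ) (hk : 1 ≤ k) (φ : Finset (Fin (k + 1)) → Bool)
    (h : eul φ = 0) : Fragmentable k φ := by
  have hfrag : StmtAux.Frag (k := k) (satSet φ) :=
    StmtAux.frag_of_sum _ (satSet φ) rfl h
  exact StmtAux.frag_ext _ _ (fun ν => by
    by_cases hφ : φ ν = true <;> simp [satSet, hφ]) hfrag
end
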